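/- Let φ = ⋁_{i=1}^ℓ ⋀_{j=1}^3 l_{i,j} be a propositional 3-DNF formula over variables v_1, …, v_n. Define the ABox A_φ = {False(a), Bool(a)} ∪ {Var(v_k) | 1 ≤ k ≤ n} ∪ {clause(a, c_i) | 1 ≤ i ≤ ℓ} ∪ {pos_j(c_i, v_k) | l_{i,j} = v_k} ∪ {neg_j(c_i, v_k) | l_{i,j} = ¬v_k}, and the EL TBox T consisting of: Bool ⊑ True; Var ⊑ ∃val.Bool; ∃val.True ⊑ True; ∃val.False ⊑ False; ∃clause.True ⊑ True; and for every choice (X_1, X_2, X_3) with X_j ∈ {pos_j.True, neg_j.False}, the axiom ∃X_1 ⊓ ∃X_2 ⊓ ∃X_3 ⊑ True. Let ω assign weight ∞ to every axiom and assertion except Bool ⊑ True, which gets weight 1. Then φ is a tautology if and only if (T, A_φ)_ω ⊨_c^1 True(a). -/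

import Mathlib

namespace DL

/-! ### Syntax -/

abbrev IndName := ℕ
abbrev CName := ℕ
abbrev RName := ℕ

/-- Roles: role names and inverse roles. -/
inductive Role where
  | name : RName → Role
  | inv  : RName → Role
deriving DecidableEq

/-- `ALCHIO` concepts. -/
inductive Concept where
  | top  : Concept
  | bot  : Concept
  | atom : CName → Concept
  | nom  : IndName → Concept
  | neg  : Concept → Concept
  | conj : Concept → Concept → Concept
  | ex   : Role → Concept → Concept
deriving DecidableEq

/-- TBox axioms: concept inclusions and role inclusions. -/
inductive Axiom where
  | ci : Concept → Concept → Axiom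
  | ri : Role → Role → Axiom
deriving DecidableEq

/-- ABox assertions. -/
inductive Assertion where
  | ca : CName → IndName → Assertion
  | ra : RName → IndName → IndName → Assertion
deriving DecidableEq

/-! ### Interpretations -/

/-- A DL interpretation with domain a subset of a universe `U`.  Individual names are
interpreted via `indI` (under the standard names assumption, the individual names of the
ABox under consideration are interpreted "as themselves", i.e. injectively). -/
structure Interp (U : Type) where
  dom : Set U
  indI : IndName → U
  cI : CName → Set U
  rI : RName → Set (U × U)
  cI_sub : ∀ A, cI A ⊆ dom
  rI_sub : ∀ r p, p ∈ rI r → p.1 ∈ dom ∧ p.2 ∈ dom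

variable {U : Type}

/-- Every individual name denotes an element of the domain. -/
def Interp.Proper (I : Interp U) : Prop := ∀ a, I.indI a ∈ I.dom

def Role.interp (I : Interp U) : Role → Set (U × U)
  | Role.name r => I.rI r
  | Role.inv r  => {p | (p.2, p.1) ∈ I.rI r}

def Concept.interp (I : Interp U) : Concept → Set U
  | Concept.top => I.dom
  | Concept.bot => ∅
  | Concept.atom A => I.cI A
  | Concept.nom a => {I.indI a} ∩ I.dom
  | Concept.neg C => I.dom \ Concept.interp I C
  | Concept.conj C D => Concept.interp I C ∩ Concept.interp I D
  | Concept.ex r C => {d | ∃ e, (d, e) ∈ Role.interp I r ∧ e ∈ Concept.interp I C}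

def Assertion.sat (I : Interp U) : Assertion → Prop
  | Assertion.ca A a => I.indI a ∈ I.cI A
  | Assertion.ra r a b => (I.indI a, I.indI b) ∈ I.rI r

/-! ### Violations and cost -/

/-- Violations of a concept inclusion `C ⊑ D`. -/
def vioCI (I : Interp U) (C D : Concept) : Set U :=
  Concept.interp I C \ Concept.interp I D

/-- Violations of a role inclusion `r ⊑ s`. -/
def vioRI (I : Interp U) (r s : Role) : Set (U × U) :=
  Role.interp I r \ Role.interp I s

/-- The number of violations of an axiom. -/
noncomputable def Axiom.vioCount (I : Interp U) : Axiom → ℕ∞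
  | Axiom.ci C D => (vioCI I C D).encard
  | Axiom.ri r s => (vioRI I r s).encard

open Classical in
/-- The cost of an interpretation w.r.t. a weighted knowledge base `(T, A)` with weight
functions `wT` (on TBox axioms) and `wA` (on ABox assertions). -/
noncomputable def cost (T : Finset Axiom) (A : Finset Assertion)
    (wT : Axiom → ℕ∞) (wA : Assertion → ℕ∞) (I : Interp U) : ℕ∞ :=
  (∑ τ ∈ T, wT τ * Axiom.vioCount I τ) +
    ∑ α ∈ A, (if Assertion.sat I α then 0 else wA α)

/-! ### Queries -/

inductive Term where
  | var : ℕ → Term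
  | ind : IndName → Term
deriving DecidableEq

inductive QAtom where
  | ca : CName → Term → QAtom
  | ra : RName → Term → Term → QAtom
deriving DecidableEq

/-- A Boolean conjunctive query: a finite set of atoms, all of whose variables are
(implicitly) existentially quantified. -/
abbrev BCQ := Finset QAtom

def Term.eval (I : Interp U) (π : ℕ → U) : Term → U
  | Term.var v => π v
  | Term.ind a => I.indI a

def QAtom.sat (I : Interp U) (π : ℕ → U) : QAtom → Prop
  | QAtom.ca A t => Term.eval I π t ∈ I.cI A
  | QAtom.ra r t t' => (Term.eval I π t, Term.eval I π t') ∈ I.rI r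

/-- Satisfaction of a BCQ in an interpretation. -/
def satQ (I : Interp U) (q : BCQ) : Prop :=
  ∃ π : ℕ → U, (∀ v, π v ∈ I.dom) ∧ ∀ a ∈ q, QAtom.sat I π a

/-- An instance query is a BCQ with a single atom. -/
def IsIQ (q : BCQ) : Prop := ∃ a : QAtom, q = {a}

/-! ### Cost-based semantics -/

/-- `k`-satisfiability: some interpretation has cost at most `k`. -/
def ksat (T : Finset Axiom) (A : Finset Assertion)
    (wT : Axiom → ℕ∞) (wA : Assertion → ℕ∞) (k : ℕ) : Prop :=
  ∃ (U : Type) (I : Interp U), I.Proper ∧ cost T A wT wA I ≤ (k : ℕ∞)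

/-- `K ⊨ₚᵏ q`: some interpretation of cost at most `k` satisfies `q`. -/
def satP (T : Finset Axiom) (A : Finset Assertion)
    (wT : Axiom → ℕ∞) (wA : Assertion → ℕ∞) (k : ℕ) (q : BCQ) : Prop :=
  ∃ (U : Type) (I : Interp U), I.Proper ∧ cost T A wT wA I ≤ (k : ℕ∞) ∧ satQ I q

/-- `K ⊨꜀ᵏ q`: every interpretation of cost at most `k` satisfies `q`. -/
def satC (T : Finset Axiom) (A : Finset Assertion)
    (wT : Axiom → ℕ∞) (wA : Assertion → ℕ∞) (k : ℕ) (q : BCQ) : Prop :=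
  ∀ (U : Type) (I : Interp U), I.Proper → cost T A wT wA I ≤ (k : ℕ∞) → satQ I q

/-- The optimal cost of a weighted knowledge base. -/
noncomputable def optCost (T : Finset Axiom) (A : Finset Assertion)
    (wT : Axiom → ℕ∞) (wA : Assertion → ℕ∞) : ℕ∞ :=
  sInf {c : ℕ∞ | ∃ (U : Type) (I : Interp U), I.Proper ∧ cost T A wT wA I = c}

/-- `K ⊨ₚᵒᵖᵗ q`: some interpretation of optimal cost satisfies `q`. -/
noncomputable def satPopt (T : Finset Axiom) (A : Finset Assertion)
    (wT : Axiom → ℕ∞) (wA : Assertion → ℕ∞) (q : BCQ) : Prop :=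
  ∃ (U : Type) (I : Interp U), I.Proper ∧ cost T A wT wA I = optCost T A wT wA ∧ satQ I q

/-- `K ⊨꜀ᵒᵖᵗ q`: every interpretation of optimal cost satisfies `q`. -/
noncomputable def satCopt (T : Finset Axiom) (A : Finset Assertion)
    (wT : Axiom → ℕ∞) (wA : Assertion → ℕ∞) (q : BCQ) : Prop :=
  ∀ (U : Type) (I : Interp U), I.Proper → cost T A wT wA I = optCost T A wT wA → satQ I q

/-! ### Occurrences of symbols -/

def Role.base : Role → RName
  | Role.name r => r
  | Role.inv r => r

def Concept.cnames : Concept → Finset CName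
  | Concept.atom A => {A}
  | Concept.neg C => C.cnames
  | Concept.conj C D => C.cnames ∪ D.cnames
  | Concept.ex _ C => C.cnames
  | _ => ∅

def Concept.rnames : Concept → Finset RName
  | Concept.neg C => C.rnames
  | Concept.conj C D => C.rnames ∪ D.rnames
  | Concept.ex r C => insert r.base C.rnames
  | _ => ∅

def Concept.indNames : Concept → Finset IndName
  | Concept.nom a => {a}
  | Concept.neg C => C.indNames
  | Concept.conj C D => C.indNames ∪ D.indNames
  | Concept.ex _ C => C.indNames
  | _ => ∅

def Axiom.cnames : Axiom → Finset CName
  | Axiom.ci C D => C.cnames ∪ D.cnames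
  | Axiom.ri _ _ => ∅

def Axiom.rnames : Axiom → Finset RName
  | Axiom.ci C D => C.rnames ∪ D.rnames
  | Axiom.ri r s => {r.base, s.base}

def Axiom.indNames : Axiom → Finset IndName
  | Axiom.ci C D => C.indNames ∪ D.indNames
  | Axiom.ri _ _ => ∅

def Assertion.cnames : Assertion → Finset CName
  | Assertion.ca A _ => {A}
  | Assertion.ra _ _ _ => ∅

def Assertion.rnames : Assertion → Finset RName
  | Assertion.ca _ _ => ∅
  | Assertion.ra r _ _ => {r}

def Assertion.indNames : Assertion → Finset IndName
  | Assertion.ca _ a => {a}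
  | Assertion.ra _ a b => {a, b}

/-- The individual names occurring in an ABox. -/
def aboxInds (A : Finset Assertion) : Finset IndName := A.biUnion Assertion.indNames

/-- The individual names occurring in a KB. -/
def kbInds (T : Finset Axiom) (A : Finset Assertion) : Finset IndName :=
  T.biUnion Axiom.indNames ∪ aboxInds A

def Term.indNames : Term → Finset IndName
  | Term.var _ => ∅
  | Term.ind a => {a}

def QAtom.indNames : QAtom → Finset IndName
  | QAtom.ca _ t => t.indNames
  | QAtom.ra _ t t' => t.indNames ∪ t'.indNames

def QAtom.cnames : QAtom → Finset CName
  | QAtom.ca A _ => {A}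
  | QAtom.ra _ _ _ => ∅

def qInds (q : BCQ) : Finset IndName := q.biUnion QAtom.indNames

def qCnames (q : BCQ) : Finset CName := q.biUnion QAtom.cnames

/-! ### Sizes -/

def Concept.size : Concept → ℕ
  | Concept.top => 1
  | Concept.bot => 1
  | Concept.atom _ => 1
  | Concept.nom _ => 1
  | Concept.neg C => C.size + 1
  | Concept.conj C D => C.size + D.size + 1
  | Concept.ex _ C => C.size + 2

def Axiom.size : Axiom → ℕ
  | Axiom.ci C D => C.size + D.size + 1
  | Axiom.ri _ _ => 3

def Assertion.size : Assertion → ℕ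
  | Assertion.ca _ _ => 2
  | Assertion.ra _ _ _ => 3

def tboxSize (T : Finset Axiom) : ℕ := ∑ τ ∈ T, τ.size

def aboxSize (A : Finset Assertion) : ℕ := ∑ α ∈ A, α.size

/-! ### DL-Lite fragments -/

/-- Basic concepts: concept names and unqualified existential restrictions `∃r` (with a
possibly inverse role `r`), the latter rendered as `∃r.⊤`. -/
inductive IsBasic : Concept → Prop
  | atom (A : CName) : IsBasic (Concept.atom A)
  | ex (r : Role) : IsBasic (Concept.ex r Concept.top)

/-- A `DL-Lite_core` axiom: `B ⊑ C` or `B ⊓ C ⊑ ⊥` with `B, C` basic concepts. -/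
def IsCoreAxiom (τ : Axiom) : Prop :=
  (∃ B C, τ = Axiom.ci B C ∧ IsBasic B ∧ IsBasic C) ∨
  (∃ B C, τ = Axiom.ci (Concept.conj B C) Concept.bot ∧ IsBasic B ∧ IsBasic C)

def IsDLLiteCore (T : Finset Axiom) : Prop := ∀ τ ∈ T, IsCoreAxiom τ

/-- Concepts built from basic concepts using `¬`, `⊓` (and hence also `⊔`). -/
inductive IsBoolConcept : Concept → Prop
  | basic {C} : IsBasic C → IsBoolConcept C
  | neg {C} : IsBoolConcept C → IsBoolConcept (Concept.neg C)
  | conj {C D} : IsBoolConcept C → IsBoolConcept D → IsBoolConcept (Concept.conj C D)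

/-- A `DL-Lite_bool^H` axiom: a concept inclusion between Boolean combinations of basic
concepts, or a role inclusion. -/
def IsBoolHAxiom (τ : Axiom) : Prop :=
  (∃ C D, τ = Axiom.ci C D ∧ IsBoolConcept C ∧ IsBoolConcept D) ∨ (∃ r s, τ = Axiom.ri r s)

def IsDLLiteBoolH (T : Finset Axiom) : Prop := ∀ τ ∈ T, IsBoolHAxiom τ

/-! Encoding of a 3-DNF formula `φ = ⋁_{i<ℓ} ⋀_{j<3} l_{i,j}` over variables
`v_0,…,v_{n-1}`: `φ i j = (b, v)` where `b = true` iff the `j`-th literal of the `i`-th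
conjunctive clause is the positive literal `v` (and `b = false` iff it is `¬v`). -/

/-- concept names -/
def cFalse : CName := 0
def cBool : CName := 1
def cTrue : CName := 2
def cVar : CName := 3

/-- role names -/
def rClause : RName := 0
def rVal : RName := 1
def rPos (j : Fin 3) : RName := 2 + (j : ℕ)
def rNeg (j : Fin 3) : RName := 5 + (j : ℕ)

/-- individual names -/
def aN : IndName := 0
def vN (n : ℕ) (k : Fin n) : IndName := 1 + (k : ℕ)
def cN (n ℓ : ℕ) (i : Fin ℓ) : IndName := 1 + n + (i : ℕ)

/-- The ABox `A_φ`. -/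
def dnfAbox (ℓ n : ℕ) (φ : Fin ℓ → Fin 3 → Bool × Fin n) : Finset Assertion :=
  {Assertion.ca cFalse aN, Assertion.ca cBool aN} ∪
  (Finset.univ.image fun k : Fin n => Assertion.ca cVar (vN n k)) ∪
  (Finset.univ.image fun i : Fin ℓ => Assertion.ra rClause aN (cN n ℓ i)) ∪
  (Finset.univ.image fun p : Fin ℓ × Fin 3 =>
    if (φ p.1 p.2).1 then Assertion.ra (rPos p.2) (cN n ℓ p.1) (vN n (φ p.1 p.2).2)
    else Assertion.ra (rNeg p.2) (cN n ℓ p.1) (vN n (φ p.1 p.2).2))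

/-- `X_j ∈ {∃pos_j.True, ∃neg_j.False}` according to the choice `f j`. -/
def comboDNF (f : Fin 3 → Bool) (j : Fin 3) : Concept :=
  if f j then Concept.ex (Role.name (rPos j)) (Concept.atom cTrue)
  else Concept.ex (Role.name (rNeg j)) (Concept.atom cFalse)

/-- The `EL` TBox `T`. -/
def dnfTbox : Finset Axiom :=
  {Axiom.ci (Concept.atom cBool) (Concept.atom cTrue),
   Axiom.ci (Concept.atom cVar) (Concept.ex (Role.name rVal) (Concept.atom cBool)),
   Axiom.ci (Concept.ex (Role.name rVal) (Concept.atom cTrue)) (Concept.atom cTrue),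
   Axiom.ci (Concept.ex (Role.name rVal) (Concept.atom cFalse)) (Concept.atom cFalse),
   Axiom.ci (Concept.ex (Role.name rClause) (Concept.atom cTrue)) (Concept.atom cTrue)} ∪
  (Finset.univ.image fun f : Fin 3 → Bool =>
    Axiom.ci (Concept.conj (Concept.conj (comboDNF f 0) (comboDNF f 1)) (comboDNF f 2))
      (Concept.atom cTrue))


/-! ### Auxiliary material for Statement 12 -/

section Stmt12

abbrev btA : Axiom := Axiom.ci (Concept.atom cBool) (Concept.atom cTrue)

abbrev comboAx (f : Fin 3 → Bool) : Axiom :=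
  Axiom.ci (Concept.conj (Concept.conj (comboDNF f 0) (comboDNF f 1)) (comboDNF f 2))
    (Concept.atom cTrue)

lemma btA_mem : btA ∈ dnfTbox := by
  unfold dnfTbox
  exact Finset.mem_union_left _ (by simp)

lemma comboAx_mem (f : Fin 3 → Bool) : comboAx f ∈ dnfTbox := by
  unfold dnfTbox
  exact Finset.mem_union_right _ (Finset.mem_image.mpr ⟨f, Finset.mem_univ _, rfl⟩)

lemma comboAx_ne (f : Fin 3 → Bool) : comboAx f ≠ btA := by
  simp [comboAx, btA]

/-- The counter-interpretation for a falsifying assignment `ν`. -/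
def cInt (ℓ n : ℕ) (φ : Fin ℓ → Fin 3 → Bool × Fin n) (ν : Fin n → Bool) : Interp ℕ where
  dom := Set.univ
  indI := id
  cI := fun A => {x |
    (A = cFalse ∧ (x = 0 ∨ ∃ k : Fin n, ν k = false ∧ x = 1 + (k : ℕ))) ∨
    (A = cBool ∧ (x = 0 ∨ x = 1 + n + ℓ)) ∨
    (A = cTrue ∧ (x = 1 + n + ℓ ∨ ∃ k : Fin n, ν k = true ∧ x = 1 + (k : ℕ))) ∨
    (A = cVar ∧ ∃ k : Fin n, x = 1 + (k : ℕ))}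
  rI := fun r => {p |
    (r = rClause ∧ ∃ i : Fin ℓ, p = (0, 1 + n + (i : ℕ))) ∨
    (r = rVal ∧ ∃ k : Fin n, p = (1 + (k : ℕ), if ν k then 1 + n + ℓ else 0)) ∨
    (∃ j : Fin 3, r = rPos j ∧ ∃ i : Fin ℓ,
      (φ i j).1 = true ∧ p = (1 + n + (i : ℕ), 1 + ((φ i j).2 : ℕ))) ∨
    (∃ j : Fin 3, r = rNeg j ∧ ∃ i : Fin ℓ,
      (φ i j).1 = false ∧ p = (1 + n + (i : ℕ), 1 + ((φ i j).2 : ℕ)))}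
  cI_sub := fun _ _ _ => trivial
  rI_sub := fun _ _ _ => ⟨trivial, trivial⟩

variable {ℓ n : ℕ} {φ : Fin ℓ → Fin 3 → Bool × Fin n} {ν : Fin n → Bool}

lemma cInt_cFalse {x : ℕ} : x ∈ (cInt ℓ n φ ν).cI cFalse ↔
    x = 0 ∨ ∃ k : Fin n, ν k = false ∧ x = 1 + (k : ℕ) := by
  simp [cInt, cFalse, cBool, cTrue, cVar]

lemma cInt_cBool {x : ℕ} : x ∈ (cInt ℓ n φ ν).cI cBool ↔
    x = 0 ∨ x = 1 + n + ℓ := by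
  simp [cInt, cFalse, cBool, cTrue, cVar]

lemma cInt_cTrue {x : ℕ} : x ∈ (cInt ℓ n φ ν).cI cTrue ↔
    x = 1 + n + ℓ ∨ ∃ k : Fin n, ν k = true ∧ x = 1 + (k : ℕ) := by
  simp [cInt, cFalse, cBool, cTrue, cVar]

lemma cInt_cVar {x : ℕ} : x ∈ (cInt ℓ n φ ν).cI cVar ↔
    ∃ k : Fin n, x = 1 + (k : ℕ) := by
  simp [cInt, cFalse, cBool, cTrue, cVar]

lemma cInt_rClause {p : ℕ × ℕ} : p ∈ (cInt ℓ n φ ν).rI rClause ↔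
    ∃ i : Fin ℓ, p = (0, 1 + n + (i : ℕ)) := by
  have h2 : ∀ j : Fin 3, rClause ≠ rPos j := by decide
  have h5 : ∀ j : Fin 3, rClause ≠ rNeg j := by decide
  simp only [cInt, Set.mem_setOf_eq]
  constructor
  · rintro (⟨_, h⟩ | ⟨h, _⟩ | ⟨j, h, _⟩ | ⟨j, h, _⟩)
    · exact h
    · exact absurd h (by decide)
    · exact absurd h (h2 j)
    · exact absurd h (h5 j)
  · intro h; exact Or.inl ⟨by trivial, h⟩

lemma cInt_rVal {p : ℕ × ℕ} : p ∈ (cInt ℓ n φ ν).rI rVal ↔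
    ∃ k : Fin n, p = (1 + (k : ℕ), if ν k then 1 + n + ℓ else 0) := by
  have h2 : ∀ j : Fin 3, rVal ≠ rPos j := by decide
  have h5 : ∀ j : Fin 3, rVal ≠ rNeg j := by decide
  simp only [cInt, Set.mem_setOf_eq]
  constructor
  · rintro (⟨h, _⟩ | ⟨_, h⟩ | ⟨j, h, _⟩ | ⟨j, h, _⟩)
    · exact absurd h (by decide)
    · exact h
    · exact absurd h (h2 j)
    · exact absurd h (h5 j)
  · intro h; exact Or.inr (Or.inl ⟨by trivial, h⟩)

lemma cInt_rPos {j : Fin 3} {p : ℕ × ℕ} : p ∈ (cInt ℓ n φ ν).rI (rPos j) ↔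
    ∃ i : Fin ℓ, (φ i j).1 = true ∧ p = (1 + n + (i : ℕ), 1 + ((φ i j).2 : ℕ)) := by
  have h0 : ∀ j : Fin 3, rPos j ≠ rClause := by decide
  have h1 : ∀ j : Fin 3, rPos j ≠ rVal := by decide
  have h5 : ∀ j j' : Fin 3, rPos j ≠ rNeg j' := by decide
  have hinj : ∀ j j' : Fin 3, rPos j = rPos j' → j = j' := by decide
  simp only [cInt, Set.mem_setOf_eq]
  constructor
  · rintro (⟨h, _⟩ | ⟨h, _⟩ | ⟨j', h, hh⟩ | ⟨j', h, _⟩)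
    · exact absurd h (h0 j)
    · exact absurd h (h1 j)
    · obtain rfl := hinj j j' h; exact hh
    · exact absurd h (h5 j j')
  · intro h; exact Or.inr (Or.inr (Or.inl ⟨j, by trivial, h⟩))

lemma cInt_rNeg {j : Fin 3} {p : ℕ × ℕ} : p ∈ (cInt ℓ n φ ν).rI (rNeg j) ↔
    ∃ i : Fin ℓ, (φ i j).1 = false ∧ p = (1 + n + (i : ℕ), 1 + ((φ i j).2 : ℕ)) := by
  have h0 : ∀ j : Fin 3, rNeg j ≠ rClause := by decide
  have h1 : ∀ j : Fin 3, rNeg j ≠ rVal := by decide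
  have h2 : ∀ j j' : Fin 3, rNeg j ≠ rPos j' := by decide
  have hinj : ∀ j j' : Fin 3, rNeg j = rNeg j' → j = j' := by decide
  simp only [cInt, Set.mem_setOf_eq]
  constructor
  · rintro (⟨h, _⟩ | ⟨h, _⟩ | ⟨j', h, _⟩ | ⟨j', h, hh⟩)
    · exact absurd h (h0 j)
    · exact absurd h (h1 j)
    · exact absurd h (h2 j j')
    · obtain rfl := hinj j j' h; exact hh
  · intro h; exact Or.inr (Or.inr (Or.inr ⟨j, by trivial, h⟩))

end Stmt12


section Stmt12b

abbrev axVar : Axiom :=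
  Axiom.ci (Concept.atom cVar) (Concept.ex (Role.name rVal) (Concept.atom cBool))
abbrev axVT : Axiom :=
  Axiom.ci (Concept.ex (Role.name rVal) (Concept.atom cTrue)) (Concept.atom cTrue)
abbrev axVF : Axiom :=
  Axiom.ci (Concept.ex (Role.name rVal) (Concept.atom cFalse)) (Concept.atom cFalse)
abbrev axCT : Axiom :=
  Axiom.ci (Concept.ex (Role.name rClause) (Concept.atom cTrue)) (Concept.atom cTrue)

lemma mem_dnfTbox {τ : Axiom} (h : τ ∈ dnfTbox) :
    τ = btA ∨ τ = axVar ∨ τ = axVT ∨ τ = axVF ∨ τ = axCT ∨ ∃ f : Fin 3 → Bool, τ = comboAx f := by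
  unfold dnfTbox at h
  rcases Finset.mem_union.mp h with h | h
  · simp only [Finset.mem_insert, Finset.mem_singleton] at h
    tauto
  · obtain ⟨f, _, hf⟩ := Finset.mem_image.mp h
    exact Or.inr (Or.inr (Or.inr (Or.inr (Or.inr ⟨f, hf.symm⟩))))

lemma axVar_mem : axVar ∈ dnfTbox := Finset.mem_union_left _ (by simp [dnfTbox])
lemma axVT_mem : axVT ∈ dnfTbox := Finset.mem_union_left _ (by simp [dnfTbox])
lemma axVF_mem : axVF ∈ dnfTbox := Finset.mem_union_left _ (by simp [dnfTbox])
lemma axCT_mem : axCT ∈ dnfTbox := Finset.mem_union_left _ (by simp [dnfTbox])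

lemma axVar_ne : axVar ≠ btA := by decide
lemma axVT_ne : axVT ≠ btA := by decide
lemma axVF_ne : axVF ≠ btA := by decide
lemma axCT_ne : axCT ≠ btA := by decide

variable {ℓ n : ℕ} {φ : Fin ℓ → Fin 3 → Bool × Fin n} {ν : Fin n → Bool}

lemma combo_elim {f : Fin 3 → Bool} {j : Fin 3} {x : ℕ}
    (h : x ∈ Concept.interp (cInt ℓ n φ ν) (comboDNF f j)) :
    ∃ i : Fin ℓ, x = 1 + n + (i : ℕ) ∧ ν (φ i j).2 = (φ i j).1 := by
  unfold comboDNF at h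
  cases hf : f j <;> rw [hf] at h <;>
    simp only [Bool.false_eq_true, if_false, if_true] at h <;>
    simp only [Concept.interp, Role.interp, Set.mem_setOf_eq] at h
  · -- f j = false : neg case
    obtain ⟨e, hedge, he⟩ := h
    obtain ⟨i, hb, hp⟩ := cInt_rNeg.mp hedge
    rw [Prod.mk.injEq] at hp
    obtain ⟨hx, hev⟩ := hp
    refine ⟨i, hx, ?_⟩
    rw [hb]
    rcases cInt_cFalse.mp (hev ▸ he) with h0 | ⟨k', hk', hk2⟩
    · omega
    · have : (φ i j).2 = k' := Fin.ext (by omega)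
      rw [this]; exact hk'
  · -- f j = true : pos case
    obtain ⟨e, hedge, he⟩ := h
    obtain ⟨i, hb, hp⟩ := cInt_rPos.mp hedge
    rw [Prod.mk.injEq] at hp
    obtain ⟨hx, hev⟩ := hp
    refine ⟨i, hx, ?_⟩
    rw [hb]
    rcases cInt_cTrue.mp (hev ▸ he) with h0 | ⟨k', hk', hk2⟩
    · have := i.isLt; have := (φ i j).2.isLt; omega
    · have : (φ i j).2 = k' := Fin.ext (by omega)
      rw [this]; exact hk'

lemma cInt_vioCI_empty (hν : ∀ i : Fin ℓ, ∃ j : Fin 3, ν (φ i j).2 ≠ (φ i j).1)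
    {τ : Axiom} (hτ : τ ∈ dnfTbox) (hne : τ ≠ btA) : Axiom.vioCount (cInt ℓ n φ ν) τ = 0 := by
  set I := cInt ℓ n φ ν with hI
  rcases mem_dnfTbox hτ with h | h | h | h | h | ⟨f, h⟩
  · exact absurd h hne
  all_goals subst h
  · -- axVar
    simp only [Axiom.vioCount, Set.encard_eq_zero, vioCI, Set.diff_eq_empty]
    intro x hx
    obtain ⟨k, rfl⟩ := cInt_cVar.mp hx
    simp only [Concept.interp, Role.interp, Set.mem_setOf_eq]
    refine ⟨if ν k then 1 + n + ℓ else 0, cInt_rVal.mpr ⟨k, rfl⟩, ?_⟩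
    cases hk : ν k <;> simp only [hk, if_true, Bool.false_eq_true, if_false] <;>
      [exact cInt_cBool.mpr (Or.inl rfl); exact cInt_cBool.mpr (Or.inr rfl)]
  · -- axVT
    simp only [Axiom.vioCount, Set.encard_eq_zero, vioCI, Set.diff_eq_empty]
    rintro x ⟨e, hedge, he⟩
    obtain ⟨k, hp⟩ := cInt_rVal.mp hedge
    rw [Prod.mk.injEq] at hp
    obtain ⟨hx, hev⟩ := hp
    cases hk : ν k
    · rw [hk] at hev; simp only [Bool.false_eq_true, if_false] at hev
      rcases cInt_cTrue.mp (hev ▸ he) with h0 | ⟨k', _, hk2⟩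
      · omega
      · omega
    · exact cInt_cTrue.mpr (Or.inr ⟨k, hk, hx⟩)
  · -- axVF
    simp only [Axiom.vioCount, Set.encard_eq_zero, vioCI, Set.diff_eq_empty]
    rintro x ⟨e, hedge, he⟩
    obtain ⟨k, hp⟩ := cInt_rVal.mp hedge
    rw [Prod.mk.injEq] at hp
    obtain ⟨hx, hev⟩ := hp
    cases hk : ν k
    · exact cInt_cFalse.mpr (Or.inr ⟨k, hk, hx⟩)
    · rw [hk] at hev; simp only [if_true] at hev
      rcases cInt_cFalse.mp (hev ▸ he) with h0 | ⟨k', _, hk2⟩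
      · omega
      · have := k'.isLt; omega
  · -- axCT
    simp only [Axiom.vioCount, Set.encard_eq_zero, vioCI, Set.diff_eq_empty]
    rintro x ⟨e, hedge, he⟩
    obtain ⟨i, hp⟩ := cInt_rClause.mp hedge
    rw [Prod.mk.injEq] at hp
    obtain ⟨hx, hev⟩ := hp
    rcases cInt_cTrue.mp (hev ▸ he) with h0 | ⟨k', _, hk2⟩
    · have := i.isLt; omega
    · have := k'.isLt; omega
  · -- combo
    simp only [Axiom.vioCount, Set.encard_eq_zero, vioCI, Set.diff_eq_empty]
    intro x hx
    simp only [Concept.interp, Set.mem_inter_iff] at hx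
    obtain ⟨⟨h0, h1⟩, h2⟩ := hx
    obtain ⟨i0, hx0, he0⟩ := combo_elim h0
    obtain ⟨i1, hx1, he1⟩ := combo_elim h1
    obtain ⟨i2, hx2, he2⟩ := combo_elim h2
    have e1 : i1 = i0 := Fin.ext (by omega)
    have e2 : i2 = i0 := Fin.ext (by omega)
    rw [e1] at he1; rw [e2] at he2
    obtain ⟨j, hj⟩ := hν i0
    exact absurd (by fin_cases j <;> assumption) hj

lemma cInt_sat_abox : ∀ α ∈ dnfAbox ℓ n φ, Assertion.sat (cInt ℓ n φ ν) α := by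
  intro α hα
  unfold dnfAbox at hα
  rcases Finset.mem_union.mp hα with hα | hα
  · rcases Finset.mem_union.mp hα with hα | hα
    · rcases Finset.mem_union.mp hα with hα | hα
      · simp only [Finset.mem_insert, Finset.mem_singleton] at hα
        rcases hα with rfl | rfl
        · exact cInt_cFalse.mpr (Or.inl rfl)
        · exact cInt_cBool.mpr (Or.inl rfl)
      · obtain ⟨k, _, rfl⟩ := Finset.mem_image.mp hα
        exact cInt_cVar.mpr ⟨k, rfl⟩
    · obtain ⟨i, _, rfl⟩ := Finset.mem_image.mp hα
      exact cInt_rClause.mpr ⟨i, rfl⟩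
  · obtain ⟨⟨i, j⟩, _, rfl⟩ := Finset.mem_image.mp hα
    cases hb : (φ i j).1 <;>
      simp only [hb, Bool.false_eq_true, if_false, if_true]
    · exact cInt_rNeg.mpr ⟨i, hb, rfl⟩
    · exact cInt_rPos.mpr ⟨i, hb, rfl⟩

lemma cInt_bt_vio : Axiom.vioCount (cInt ℓ n φ ν) btA ≤ 1 := by
  simp only [Axiom.vioCount]
  refine le_trans (Set.encard_le_encard (t := {0}) ?_) (by simp)
  rintro x ⟨hB, hT⟩
  rcases cInt_cBool.mp hB with rfl | rfl
  · rfl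
  · exact absurd (cInt_cTrue.mpr (Or.inl rfl)) hT

lemma cInt_cost_le (hν : ∀ i : Fin ℓ, ∃ j : Fin 3, ν (φ i j).2 ≠ (φ i j).1) :
    cost dnfTbox (dnfAbox ℓ n φ)
      (fun τ => if τ = Axiom.ci (Concept.atom cBool) (Concept.atom cTrue) then 1 else ⊤)
      (fun _ => ⊤) (cInt ℓ n φ ν) ≤ (1 : ℕ∞) := by
  classical
  unfold cost
  have hA : ∑ α ∈ dnfAbox ℓ n φ,
      (if Assertion.sat (cInt ℓ n φ ν) α then (0 : ℕ∞) else ⊤) = 0 :=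
    Finset.sum_eq_zero fun α hα => if_pos (cInt_sat_abox α hα)
  rw [hA, add_zero]
  calc ∑ τ ∈ dnfTbox, (if τ = btA then (1:ℕ∞) else ⊤) * Axiom.vioCount (cInt ℓ n φ ν) τ
      ≤ ∑ τ ∈ dnfTbox, (if τ = btA then (1:ℕ∞) else 0) := by
        refine Finset.sum_le_sum fun τ hτ => ?_
        by_cases hbt : τ = btA
        · subst hbt
          simp only [eq_self_iff_true, if_true, one_mul]
          exact cInt_bt_vio
        · rw [if_neg hbt, if_neg hbt, cInt_vioCI_empty hν hτ hbt, mul_zero]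
    _ = 1 := by rw [Finset.sum_ite_eq' dnfTbox btA (fun _ => (1:ℕ∞)), if_pos btA_mem]

end Stmt12b


open Classical in
lemma cost_le_one_tbox {U : Type} {I : Interp U} {T : Finset Axiom} {A : Finset Assertion}
    {wT : Axiom → ℕ∞} {wA : Assertion → ℕ∞} (hc : cost T A wT wA I ≤ 1)
    {τ : Axiom} (hτ : τ ∈ T) : wT τ * Axiom.vioCount I τ ≤ 1 := by
  unfold cost at hc
  exact le_trans (le_trans (Finset.single_le_sum
    (f := fun τ => wT τ * Axiom.vioCount I τ) (fun _ _ => zero_le) hτ) le_self_add) hc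

open Classical in
lemma cost_le_one_abox {U : Type} {I : Interp U} {T : Finset Axiom} {A : Finset Assertion}
    {wT : Axiom → ℕ∞} {wA : Assertion → ℕ∞} (hc : cost T A wT wA I ≤ 1)
    {α : Assertion} (hα : α ∈ A) (hw : wA α = ⊤) : Assertion.sat I α := by
  by_contra hns
  unfold cost at hc
  have h1 : (if Assertion.sat I α then (0:ℕ∞) else wA α) ≤ 1 :=
    le_trans (le_trans (Finset.single_le_sum
      (f := fun α => if Assertion.sat I α then (0:ℕ∞) else wA α)
      (fun _ _ => zero_le) hα) le_add_self) hc
  rw [if_neg hns, hw] at h1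
  exact absurd h1 (by simp)

/-- A 3-DNF formula `φ` is a tautology iff
`(T, A_φ)_ω ⊨꜀¹ True(a)`, where `ω` assigns `∞` to every axiom and assertion except
`Bool ⊑ True`, which gets weight `1`. -/
theorem statement12 (ℓ n : ℕ) (φ : Fin ℓ → Fin 3 → Bool × Fin n) :
    (∀ ν : Fin n → Bool, ∃ i : Fin ℓ, ∀ j : Fin 3, ν (φ i j).2 = (φ i j).1) ↔
      satC dnfTbox (dnfAbox ℓ n φ)
        (fun τ => if τ = Axiom.ci (Concept.atom cBool) (Concept.atom cTrue) then 1 else ⊤)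
        (fun _ => ⊤) 1 {QAtom.ca cTrue (Term.ind aN)} := by
  constructor
  · -- tautology → satC
    intro h U I hP hc
    have hT : ∀ τ ∈ dnfTbox,
        (if τ = Axiom.ci (Concept.atom cBool) (Concept.atom cTrue) then (1:ℕ∞) else ⊤) *
          Axiom.vioCount I τ ≤ 1 := fun τ hτ => cost_le_one_tbox hc hτ
    have hsub : ∀ C D, Axiom.ci C D ∈ dnfTbox → Axiom.ci C D ≠ btA →
        Concept.interp I C ⊆ Concept.interp I D := by
      intro C D hm hne
      have h1 := hT _ hm
      rw [if_neg hne] at h1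
      by_cases h0 : Axiom.vioCount I (Axiom.ci C D) = 0
      · simp only [Axiom.vioCount, Set.encard_eq_zero, vioCI] at h0
        exact Set.diff_eq_empty.mp h0
      · rw [ENat.top_mul h0] at h1
        exact absurd h1 (by simp)
    have hbt : (vioCI I (Concept.atom cBool) (Concept.atom cTrue)).encard ≤ 1 := by
      have h1 := hT _ btA_mem
      rw [if_pos rfl, one_mul] at h1
      exact h1
    have hA : ∀ α ∈ dnfAbox ℓ n φ, Assertion.sat I α :=
      fun α hα => cost_le_one_abox hc hα rfl
    have haT : I.indI aN ∈ I.cI cTrue := by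
      by_contra ha
      have hFa : I.indI aN ∈ I.cI cFalse := hA (Assertion.ca cFalse aN) (by
        unfold dnfAbox
        exact Finset.mem_union_left _ (Finset.mem_union_left _
          (Finset.mem_union_left _ (by simp))))
      have hBa : I.indI aN ∈ I.cI cBool := hA (Assertion.ca cBool aN) (by
        unfold dnfAbox
        exact Finset.mem_union_left _ (Finset.mem_union_left _
          (Finset.mem_union_left _ (by simp))))
      have hVar : ∀ k : Fin n, I.indI (vN n k) ∈ I.cI cVar := fun k =>
        hA (Assertion.ca cVar (vN n k)) (by
        unfold dnfAbox
        exact Finset.mem_union_left _ (Finset.mem_union_left _ (Finset.mem_union_right _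
          (Finset.mem_image.mpr ⟨k, Finset.mem_univ _, rfl⟩))))
      have hCl : ∀ i : Fin ℓ, (I.indI aN, I.indI (cN n ℓ i)) ∈ I.rI rClause := fun i =>
        hA (Assertion.ra rClause aN (cN n ℓ i)) (by
        unfold dnfAbox
        exact Finset.mem_union_left _ (Finset.mem_union_right _
          (Finset.mem_image.mpr ⟨i, Finset.mem_univ _, rfl⟩)))
      have hLit : ∀ (i : Fin ℓ) (j : Fin 3), Assertion.sat I
          (if (φ i j).1 then Assertion.ra (rPos j) (cN n ℓ i) (vN n (φ i j).2)
           else Assertion.ra (rNeg j) (cN n ℓ i) (vN n (φ i j).2)) := fun i j => hA _ (by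
        unfold dnfAbox
        exact Finset.mem_union_right _
          (Finset.mem_image.mpr ⟨(i, j), Finset.mem_univ _, rfl⟩))
      have hval : ∀ k : Fin n, ∃ e, (I.indI (vN n k), e) ∈ I.rI rVal ∧ e ∈ I.cI cBool := by
        intro k
        have := hsub _ _ axVar_mem axVar_ne (hVar k)
        simpa [Concept.interp, Role.interp] using this
      choose ev hev1 hev2 using hval
      classical
      set ν : Fin n → Bool := fun k => if ev k ∈ I.cI cTrue then true else false with hνdef
      have hνT : ∀ k, ν k = true → I.indI (vN n k) ∈ I.cI cTrue := by
        intro k hk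
        have hkT : ev k ∈ I.cI cTrue := by
          by_contra hno
          simp [hνdef, hno] at hk
        exact hsub _ _ axVT_mem axVT_ne ⟨ev k, hev1 k, hkT⟩
      have hνF : ∀ k, ν k = false → I.indI (vN n k) ∈ I.cI cFalse := by
        intro k hk
        have hkT : ev k ∉ I.cI cTrue := by
          intro hyes
          simp [hνdef, hyes] at hk
        have hviol : ev k ∈ vioCI I (Concept.atom cBool) (Concept.atom cTrue) :=
          ⟨hev2 k, hkT⟩
        have haviol : I.indI aN ∈ vioCI I (Concept.atom cBool) (Concept.atom cTrue) :=
          ⟨hBa, ha⟩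
        have heq : ev k = I.indI aN := Set.encard_le_one_iff.mp hbt _ _ hviol haviol
        exact hsub _ _ axVF_mem axVF_ne ⟨ev k, hev1 k, heq ▸ hFa⟩
      obtain ⟨i, hi⟩ := h ν
      have hj : ∀ j : Fin 3,
          I.indI (cN n ℓ i) ∈ Concept.interp I (comboDNF (fun j => (φ i j).1) j) := by
        intro j
        have hl := hLit i j
        unfold comboDNF
        cases hb : (φ i j).1 <;>
          simp only [hb, Bool.false_eq_true, if_false, if_true] at hl ⊢
        · exact ⟨I.indI (vN n (φ i j).2), hl, hνF _ (by rw [hi j, hb])⟩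
        · exact ⟨I.indI (vN n (φ i j).2), hl, hνT _ (by rw [hi j, hb])⟩
      have hcomb : I.indI (cN n ℓ i) ∈ Concept.interp I
          (Concept.conj (Concept.conj (comboDNF (fun j => (φ i j).1) 0)
            (comboDNF (fun j => (φ i j).1) 1)) (comboDNF (fun j => (φ i j).1) 2)) :=
        ⟨⟨hj 0, hj 1⟩, hj 2⟩
      have hciT : I.indI (cN n ℓ i) ∈ I.cI cTrue :=
        hsub _ _ (comboAx_mem _) (comboAx_ne _) hcomb
      exact ha (hsub _ _ axCT_mem axCT_ne ⟨I.indI (cN n ℓ i), hCl i, hciT⟩)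
    refine ⟨fun _ => I.indI aN, fun _ => hP aN, ?_⟩
    intro q hq
    rw [Finset.mem_singleton] at hq
    subst hq
    exact haT
  · -- satC → tautology
    intro hs ν
    by_contra hνn
    push_neg at hνn
    obtain ⟨π, _, hsat⟩ := hs ℕ (cInt ℓ n φ ν) (fun _ => Set.mem_univ _) (cInt_cost_le hνn)
    have h0 : (0:ℕ) ∈ (cInt ℓ n φ ν).cI cTrue := hsat _ (Finset.mem_singleton_self _)
    rcases cInt_cTrue.mp h0 with h | ⟨k, _, hk⟩
    · omega
    · omega

end DL
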